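/- For each a ∈ J_g, Taylor's formula gives the exact representation (φ′(g(a+)) + φ′(g(a−)))/2 − (φ(g(a+)) − φ(g(a−)))/(g(a+) − g(a−)) = (1/(2(g(a+)−g(a−)))) ∫_{g(a−)}^{g(a+)} ∫_{g(a−)}^{g(a+)} sgn(y−x)·φ″(y) dy dx, for any C² function φ and any real numbers g(a−) < g(a+). -/

import Mathlib

lemma measurable_real_sign : Measurable Real.sign := by
  unfold Real.sign
  exact Measurable.ite (measurableSet_lt measurable_id measurable_const) measurable_const
    (Measurable.ite (measurableSet_lt measurable_const measurable_id) measurable_const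
      measurable_const)

lemma abs_real_sign_le (r : ℝ) : ‖Real.sign r‖ ≤ 1 := by
  rcases Real.sign_apply_eq r with h | h | h <;> simp [h]

/-- Taylor's formula representation of the jump drift term: for a `C²` function `φ` and
reals `a < b`,
`(φ′(b)+φ′(a))/2 − (φ(b)−φ(a))/(b−a) = (1/(2(b−a))) ∫_a^b ∫_a^b sgn(y−x) φ″(y) dy dx`. -/
theorem jump_term_taylor_representation (φ : ℝ → ℝ) (hφ : ContDiff ℝ 2 φ)
    (a b : ℝ) (hab : a < b) :
    (deriv φ b + deriv φ a) / 2 - (φ b - φ a) / (b - a) =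
      (1 / (2 * (b - a))) *
        ∫ x in a..b, (∫ y in a..b, Real.sign (y - x) * deriv (deriv φ) y) := by
  have hf1 : ContDiff ℝ 1 (deriv φ) := by
    have h2 : ContDiff ℝ ((1 : ℕ) + 1 : ℕ) φ := by exact_mod_cast hφ
    exact (contDiff_succ_iff_deriv.mp
      (by exact_mod_cast h2 : ContDiff ℝ ((1 : ℕ∞) + 1) φ)).2.2
  set f := deriv φ with hfdef
  have hdf : Differentiable ℝ f := hf1.differentiable one_ne_zero
  have hφd : Differentiable ℝ φ := hφ.differentiable (by norm_num)
  have hcont : Continuous (deriv f) := hf1.continuous_deriv le_rfl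
  have hfc : Continuous f := hdf.continuous
  -- integrability of the inner integrand on any interval
  have hInt : ∀ x c d : ℝ,
      IntervalIntegrable (fun y => Real.sign (y - x) * deriv f y) MeasureTheory.volume c d := by
    intro x c d
    rw [intervalIntegrable_iff]
    refine MeasureTheory.Integrable.bdd_mul ?_ ?_ (c := 1) (Filter.Eventually.of_forall fun y => abs_real_sign_le _)
    · exact (hcont.intervalIntegrable c d).def'
    · exact ((measurable_real_sign.comp (measurable_id.sub measurable_const))).aestronglyMeasurable
  -- the inner integral equals `f a + f b - 2 f x` on `[a, b]`
  have key : ∀ x ∈ Set.Icc a b,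
      (∫ y in a..b, Real.sign (y - x) * deriv f y) = f a + f b - 2 * f x := by
    rintro x ⟨hax, hxb⟩
    have hsplit := intervalIntegral.integral_add_adjacent_intervals (hInt x a x) (hInt x x b)
    have hne : ∀ᵐ y : ℝ, y ≠ x := by
      refine (MeasureTheory.ae_iff).mpr ?_
      simpa using MeasureTheory.measure_singleton (μ := MeasureTheory.volume) x
    have h1 : (∫ y in a..x, Real.sign (y - x) * deriv f y) = ∫ y in a..x, -deriv f y := by
      apply intervalIntegral.integral_congr_ae
      filter_upwards [hne] with y hy hy2
      rw [Set.uIoc_of_le hax] at hy2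
      have : y - x < 0 := sub_neg.mpr (lt_of_le_of_ne hy2.2 hy)
      rw [Real.sign_of_neg this]; ring
    have h2 : (∫ y in x..b, Real.sign (y - x) * deriv f y) = ∫ y in x..b, deriv f y := by
      apply intervalIntegral.integral_congr_ae
      filter_upwards with y hy2
      rw [Set.uIoc_of_le hxb] at hy2
      rw [Real.sign_of_pos (sub_pos.mpr hy2.1)]; ring
    have hd1 : (∫ y in a..x, deriv f y) = f x - f a :=
      intervalIntegral.integral_deriv_eq_sub (fun t _ => hdf t)
        (hcont.intervalIntegrable a x)
    have hd2 : (∫ y in x..b, deriv f y) = f b - f x :=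
      intervalIntegral.integral_deriv_eq_sub (fun t _ => hdf t)
        (hcont.intervalIntegrable x b)
    rw [← hsplit, h1, h2, intervalIntegral.integral_neg, hd1, hd2]; ring
  rw [intervalIntegral.integral_congr (g := fun x => f a + f b - 2 * f x)
    (by rw [Set.uIcc_of_le hab.le]; exact fun x hx => key x hx)]
  have hφint : (∫ x in a..b, deriv φ x) = φ b - φ a :=
    intervalIntegral.integral_deriv_eq_sub (fun t _ => hφd t)
      (hfc.intervalIntegrable a b)
  have : (∫ x in a..b, (f a + f b - 2 * f x)) =
      (f a + f b) * (b - a) - 2 * (φ b - φ a) := by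
    rw [intervalIntegral.integral_sub (intervalIntegrable_const)
        ((hfc.intervalIntegrable a b).const_mul 2),
      intervalIntegral.integral_const, intervalIntegral.integral_const_mul, hφint]
    simp [smul_eq_mul]; ring
  rw [this]
  have hba : b - a ≠ 0 := sub_ne_zero.mpr hab.ne'
  field_simp
  ring_nf
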